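/- Let s_1, …, s_n be nondegenerate segments contained in [a,b] with pairwise disjoint interiors. If p is a real polynomial of degree at most n−1 with ∫_{s_i} p(x) dx = 0 for every i = 1, …, n, then p = 0. Consequently, the linear map ℙ_{n−1} → ℝ^n, p ↦ (μ_{s_1}(p), …, μ_{s_n}(p)), is bijective, i.e., the set {s_1, …, s_n} is unisolvent for ℙ_{n−1}. -/
import Mathlib


open Real Set Polynomial

/-- Segmental average: `μ_[a,b](f) = (b-a)⁻¹ ∫_a^b f`. -/
noncomputable def segAvg (a b : ℝ) (f : ℝ → ℝ) : ℝ := (b - a)⁻¹ * ∫ x in a..b, f x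

lemma exists_root_of_integral_eq_zero (p : Polynomial ℝ) {α β : ℝ} (hab : α < β)
    (h : (∫ x in α..β, p.eval x) = 0) : ∃ c ∈ Set.Ioo α β, p.eval c = 0 := by
  have hc : Continuous fun x => p.eval x := p.continuous
  set F : ℝ → ℝ := fun u => ∫ x in α..u, p.eval x with hF
  have hFd : ∀ u, deriv F u = p.eval u := fun u =>
    Continuous.deriv_integral _ hc α u
  have hFcont : ContinuousOn F (Set.Icc α β) := by
    have : Differentiable ℝ F := fun u =>
      ((intervalIntegral.integral_hasDerivAt_right
        (hc.intervalIntegrable α u)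
        (hc.aestronglyMeasurable.stronglyMeasurableAtFilter) hc.continuousAt)).differentiableAt
    exact this.continuous.continuousOn
  have hFab : F α = F β := by
    simp [hF, intervalIntegral.integral_same, h]
  obtain ⟨c, hc1, hc2⟩ := exists_deriv_eq_zero hab hFcont hFab
  exact ⟨c, hc1, by rw [← hFd c, hc2]⟩

/-- Unisolvence of segments with pairwise disjoint interiors: a polynomial of degree
at most `n-1` with vanishing integrals over the `n` segments is zero, and consequently
the segmental average map `ℙ_{n-1} → ℝⁿ` is bijective. -/
theorem stmt_1 (a b : ℝ) (n : ℕ) (hn : 1 ≤ n) (lo hi : Fin n → ℝ)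
    (hseg : ∀ i, lo i < hi i)
    (hsub : ∀ i, Set.Icc (lo i) (hi i) ⊆ Set.Icc a b)
    (hdisj : ∀ i j, i ≠ j → Set.Ioo (lo i) (hi i) ∩ Set.Ioo (lo j) (hi j) = ∅) :
    (∀ p : Polynomial ℝ, p ∈ Polynomial.degreeLT ℝ n →
      (∀ i, (∫ x in (lo i)..(hi i), p.eval x) = 0) → p = 0) ∧
    Function.Bijective (fun p : Polynomial.degreeLT ℝ n =>
      fun i : Fin n => segAvg (lo i) (hi i) fun x => Polynomial.eval x (p : Polynomial ℝ)) := by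
  have key : ∀ p : Polynomial ℝ, p ∈ Polynomial.degreeLT ℝ n →
      (∀ i, (∫ x in (lo i)..(hi i), p.eval x) = 0) → p = 0 := by
    intro p hp hint
    have hroot : ∀ i : Fin n, ∃ c ∈ Set.Ioo (lo i) (hi i), p.eval c = 0 := fun i =>
      exists_root_of_integral_eq_zero p (hseg i) (hint i)
    choose r hr hrz using hroot
    have hrinj : Function.Injective r := by
      intro i j hij
      by_contra hne
      have := hdisj i j hne
      have : r i ∈ Set.Ioo (lo i) (hi i) ∩ Set.Ioo (lo j) (hi j) :=
        ⟨hr i, hij ▸ hr j⟩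
      simp_all
    rcases eq_or_ne p 0 with h0 | h0
    · exact h0
    · refine Polynomial.eq_zero_of_natDegree_lt_card_of_eval_eq_zero p hrinj hrz ?_
      rw [Fintype.card_fin]
      rw [Polynomial.mem_degreeLT] at hp
      exact (Polynomial.natDegree_lt_iff_degree_lt (n := n) h0).2 (by exact_mod_cast hp)
  refine ⟨key, ?_⟩
  -- Build the linear map
  let L : Polynomial.degreeLT ℝ n →ₗ[ℝ] (Fin n → ℝ) :=
    { toFun := fun p => fun i : Fin n =>
        segAvg (lo i) (hi i) fun x => Polynomial.eval x (p : Polynomial ℝ)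
      map_add' := by
        intro p q
        funext i
        simp only [segAvg, Submodule.coe_add, Polynomial.eval_add, Pi.add_apply]
        rw [intervalIntegral.integral_add
          ((Polynomial.continuous _).intervalIntegrable _ _)
          ((Polynomial.continuous _).intervalIntegrable _ _)]
        ring
      map_smul' := by
        intro c p
        funext i
        simp only [segAvg, Submodule.coe_smul, Polynomial.eval_smul, smul_eq_mul,
          RingHom.id_apply, Pi.smul_apply]
        rw [intervalIntegral.integral_const_mul]
        ring }
  have hLinj : Function.Injective L := by
    rw [← LinearMap.ker_eq_bot, LinearMap.ker_eq_bot']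
    intro p hp
    have hint : ∀ i, (∫ x in (lo i)..(hi i), (p : Polynomial ℝ).eval x) = 0 := by
      intro i
      have := congrFun hp i
      simp only [L, LinearMap.coe_mk, AddHom.coe_mk, segAvg, Pi.zero_apply] at this
      have hne : (hi i - lo i)⁻¹ ≠ 0 := inv_ne_zero (sub_ne_zero.2 (hseg i).ne')
      exact (mul_eq_zero.1 this).resolve_left hne
    have := key (p : Polynomial ℝ) p.2 hint
    exact Subtype.ext this
  haveI : FiniteDimensional ℝ (Polynomial.degreeLT ℝ n) :=
    Module.Finite.equiv (Polynomial.degreeLTEquiv ℝ n).symm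
  have hrank : Module.finrank ℝ (Polynomial.degreeLT ℝ n) = Module.finrank ℝ (Fin n → ℝ) := by
    rw [(Polynomial.degreeLTEquiv ℝ n).finrank_eq]
  have hLbij : Function.Bijective L :=
    ⟨hLinj, (LinearMap.injective_iff_surjective_of_finrank_eq_finrank hrank).1 hLinj⟩
  exact hLbij
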